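/- The inverse Mills ratio ε(ξ) = φ(ξ)/Φ(ξ) satisfies 0 < ξ·ε(ξ) + ε(ξ)² < 1 for all ξ ∈ ℝ. -/

import Mathlib

open MeasureTheory Real Filter Set Topology

noncomputable def stdNormalPDF (x : ℝ) : ℝ := Real.exp (-x ^ 2 / 2) / Real.sqrt (2 * Real.pi)

noncomputable def stdNormalCDF (x : ℝ) : ℝ := ∫ t in Set.Iic x, stdNormalPDF t

lemma pdf_pos (x : ℝ) : 0 < stdNormalPDF x :=
  div_pos (Real.exp_pos _) (Real.sqrt_pos.2 (by positivity))

lemma pdf_continuous : Continuous stdNormalPDF := by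
  unfold stdNormalPDF; fun_prop

lemma pdf_eq (x : ℝ) : stdNormalPDF x
    = Real.exp (-(1/2) * x ^ 2) * (1 / Real.sqrt (2 * Real.pi)) := by
  unfold stdNormalPDF
  rw [div_eq_mul_one_div]
  congr 2
  ring

lemma pdf_integrable : Integrable stdNormalPDF := by
  have h := (integrable_exp_neg_mul_sq (by norm_num : (0:ℝ) < 1/2)).mul_const
    (1 / Real.sqrt (2 * Real.pi))
  exact h.congr (Eventually.of_forall fun x => (pdf_eq x).symm)

lemma t_pdf_integrable : Integrable (fun t : ℝ => -t * stdNormalPDF t) := by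
  have h := ((integrable_mul_exp_neg_mul_sq (by norm_num : (0:ℝ) < 1/2)).mul_const
    (1 / Real.sqrt (2 * Real.pi))).neg
  refine h.congr (Eventually.of_forall fun x => ?_)
  simp only [Pi.neg_apply]
  rw [pdf_eq]
  ring

lemma pdf_hasDerivAt (x : ℝ) : HasDerivAt stdNormalPDF (-x * stdNormalPDF x) x := by
  have h1 : HasDerivAt (fun y : ℝ => -y ^ 2 / 2) (-x) x := by
    have := ((hasDerivAt_pow 2 x).neg).div_const 2
    refine this.congr_deriv ?_
    push_cast
    ring
  have h2 := (h1.exp).div_const (Real.sqrt (2 * Real.pi))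
  have : -x * stdNormalPDF x = Real.exp (-x ^ 2 / 2) * (-x) / Real.sqrt (2 * Real.pi) := by
    unfold stdNormalPDF; ring
  rw [this]
  exact h2

lemma cdf_hasDerivAt (x : ℝ) : HasDerivAt stdNormalCDF (stdNormalPDF x) x := by
  have key : ∀ u : ℝ, stdNormalCDF u = stdNormalCDF 0 + ∫ t in (0:ℝ)..u, stdNormalPDF t := by
    intro u
    rw [← intervalIntegral.integral_Iic_sub_Iic (pdf_integrable.integrableOn)
      (pdf_integrable.integrableOn)]
    unfold stdNormalCDF
    ring
  have h : HasDerivAt (fun u => stdNormalCDF 0 + ∫ t in (0:ℝ)..u, stdNormalPDF t)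
      (stdNormalPDF x) x := by
    refine HasDerivAt.const_add _ ?_
    exact intervalIntegral.integral_hasDerivAt_right
      pdf_integrable.intervalIntegrable
      (pdf_continuous.stronglyMeasurable.stronglyMeasurableAtFilter)
      pdf_continuous.continuousAt
  exact h.congr_of_eventuallyEq (Eventually.of_forall key)

lemma cdf_pos (x : ℝ) : 0 < stdNormalCDF x := by
  unfold stdNormalCDF
  rw [setIntegral_pos_iff_support_of_nonneg_ae
    (Eventually.of_forall fun t => (pdf_pos t).le) pdf_integrable.integrableOn]
  have : Function.support stdNormalPDF = Set.univ := by
    ext t; simp [Function.mem_support, (pdf_pos t).ne']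
  rw [this, Set.univ_inter]
  simp [Real.volume_Iic]

lemma sq_tendsto : Tendsto (fun x : ℝ => x ^ 2 / 2) atBot atTop := by
  have h1 : Tendsto (fun x : ℝ => x ^ 2) atBot atTop := by
    refine Tendsto.congr (fun x => ?_)
      ((tendsto_pow_atTop (n := 2) two_ne_zero).comp tendsto_neg_atBot_atTop)
    simp [Function.comp]
  exact h1.atTop_div_const (by norm_num)

lemma P2 : Tendsto (fun x : ℝ => x ^ 2 * stdNormalPDF x) atBot (𝓝 0) := by
  have h := (tendsto_pow_mul_exp_neg_atTop_nhds_zero 1).comp sq_tendsto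
  have h2 := h.const_mul (2 / Real.sqrt (2 * Real.pi))
  rw [mul_zero] at h2
  refine h2.congr fun x => ?_
  simp only [Function.comp_apply, pow_one]
  rw [show -(x ^ 2 / 2) = -(1/2) * x ^ 2 by ring, pdf_eq]
  have h3 : Real.sqrt (2 * Real.pi) ≠ 0 := by positivity
  field_simp

lemma P0 : Tendsto stdNormalPDF atBot (𝓝 0) := by
  refine tendsto_of_tendsto_of_tendsto_of_le_of_le' tendsto_const_nhds P2 ?_ ?_
  · exact Eventually.of_forall fun x => (pdf_pos x).le
  · filter_upwards [eventually_le_atBot (-1 : ℝ)] with x hx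
    nlinarith [pdf_pos x, sq_nonneg (x + 1), sq_nonneg (x - 1)]

lemma P1 : Tendsto (fun x : ℝ => x * stdNormalPDF x) atBot (𝓝 0) := by
  have hneg := P2.neg
  rw [neg_zero] at hneg
  refine tendsto_of_tendsto_of_tendsto_of_le_of_le' hneg tendsto_const_nhds ?_ ?_
  · filter_upwards [eventually_le_atBot (-1 : ℝ)] with x hx
    nlinarith [pdf_pos x, mul_nonneg (mul_nonneg (by linarith : (0:ℝ) ≤ -x)
      (by linarith : (0:ℝ) ≤ -(1 + x))) (pdf_pos x).le]
  · filter_upwards [eventually_le_atBot (0 : ℝ)] with x hx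
    exact mul_nonpos_of_nonpos_of_nonneg hx (pdf_pos x).le

lemma int_neg_t_pdf (a : ℝ) :
    ∫ t in Set.Iic a, (-t * stdNormalPDF t) = stdNormalPDF a := by
  have := integral_Iic_of_hasDerivAt_of_tendsto' (f := stdNormalPDF)
    (f' := fun t => -t * stdNormalPDF t) (a := a) (m := 0)
    (fun x _ => pdf_hasDerivAt x) t_pdf_integrable.integrableOn P0
  simpa using this

lemma cdf_le_pdf {a : ℝ} (ha : a ≤ -1) : stdNormalCDF a ≤ stdNormalPDF a := by
  rw [← int_neg_t_pdf a]
  unfold stdNormalCDF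
  refine setIntegral_mono_on pdf_integrable.integrableOn t_pdf_integrable.integrableOn
    measurableSet_Iic fun t ht => ?_
  have h1 : (1:ℝ) ≤ -t := by simp only [Set.mem_Iic] at ht; linarith
  nlinarith [pdf_pos t]

lemma C0 : Tendsto stdNormalCDF atBot (𝓝 0) := by
  refine tendsto_of_tendsto_of_tendsto_of_le_of_le' tendsto_const_nhds P0 ?_ ?_
  · exact Eventually.of_forall fun x => (cdf_pos x).le
  · filter_upwards [eventually_le_atBot (-1 : ℝ)] with x hx
    exact cdf_le_pdf hx

lemma C1 : Tendsto (fun x : ℝ => x * stdNormalCDF x) atBot (𝓝 0) := by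
  refine tendsto_of_tendsto_of_tendsto_of_le_of_le' P1 tendsto_const_nhds ?_ ?_
  · filter_upwards [eventually_le_atBot (-1 : ℝ)] with x hx
    have := cdf_le_pdf hx
    nlinarith
  · filter_upwards [eventually_le_atBot (0 : ℝ)] with x hx
    exact mul_nonpos_of_nonpos_of_nonneg hx (cdf_pos x).le

lemma C2 : Tendsto (fun x : ℝ => x ^ 2 * stdNormalCDF x) atBot (𝓝 0) := by
  refine tendsto_of_tendsto_of_tendsto_of_le_of_le' tendsto_const_nhds P2 ?_ ?_
  · exact Eventually.of_forall fun x => mul_nonneg (sq_nonneg x) (cdf_pos x).le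
  · filter_upwards [eventually_le_atBot (-1 : ℝ)] with x hx
    have := cdf_le_pdf hx
    nlinarith [sq_nonneg x]

lemma pos_of_strictMono_tendsto {F : ℝ → ℝ} (hm : StrictMono F)
    (h0 : Tendsto F atBot (𝓝 0)) (x : ℝ) : 0 < F x := by
  have h1 : 0 ≤ F (x - 1) := by
    refine le_of_tendsto h0 ?_
    filter_upwards [eventually_le_atBot (x - 1)] with t ht
    exact hm.monotone ht
  exact lt_of_le_of_lt h1 (hm (sub_one_lt x))

lemma F_pos (x : ℝ) : 0 < x * stdNormalCDF x + stdNormalPDF x := by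
  have hd : ∀ y : ℝ, HasDerivAt (fun x => x * stdNormalCDF x + stdNormalPDF x)
      (stdNormalCDF y) y := by
    intro y
    have := ((hasDerivAt_id' (x := y)).mul (cdf_hasDerivAt y)).add (pdf_hasDerivAt y)
    refine this.congr_deriv ?_
    ring
  refine pos_of_strictMono_tendsto (F := fun x => x * stdNormalCDF x + stdNormalPDF x)
    (strictMono_of_deriv_pos fun y => ?_) ?_ x
  · rw [(hd y).deriv]; exact cdf_pos y
  · simpa using C1.add P0

lemma H_pos (x : ℝ) :
    0 < (1 + x ^ 2) * stdNormalCDF x + x * stdNormalPDF x := by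
  have hd : ∀ y : ℝ, HasDerivAt (fun x => (1 + x ^ 2) * stdNormalCDF x + x * stdNormalPDF x)
      (2 * (y * stdNormalCDF y + stdNormalPDF y)) y := by
    intro y
    have h1 : HasDerivAt (fun x : ℝ => 1 + x ^ 2) (2 * y) y := by
      have := (hasDerivAt_pow 2 y).const_add 1
      refine this.congr_deriv ?_
      push_cast
      ring
    have := (h1.mul (cdf_hasDerivAt y)).add
      ((hasDerivAt_id' (x := y)).mul (pdf_hasDerivAt y))
    refine this.congr_deriv ?_
    ring
  refine pos_of_strictMono_tendsto
    (F := fun x => (1 + x ^ 2) * stdNormalCDF x + x * stdNormalPDF x)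
    (strictMono_of_deriv_pos fun y => ?_) ?_ x
  · rw [(hd y).deriv]
    have := F_pos y
    linarith
  · have h := (C0.add C2).add P1
    simp only [add_zero] at h
    exact h.congr fun x => by ring

lemma G_pos (x : ℝ) :
    0 < stdNormalCDF x ^ 2 - x * stdNormalPDF x * stdNormalCDF x - stdNormalPDF x ^ 2 := by
  have hd : ∀ y : ℝ, HasDerivAt
      (fun x => stdNormalCDF x ^ 2 - x * stdNormalPDF x * stdNormalCDF x - stdNormalPDF x ^ 2)
      (stdNormalPDF y * ((1 + y ^ 2) * stdNormalCDF y + y * stdNormalPDF y)) y := by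
    intro y
    have hΦ := cdf_hasDerivAt y
    have hφ := pdf_hasDerivAt y
    have h1 := hΦ.pow 2
    have h2 := ((hasDerivAt_id' (x := y)).mul hφ).mul hΦ
    have h3 := hφ.pow 2
    have := (h1.sub h2).sub h3
    refine this.congr_deriv ?_
    simp only [Pi.mul_apply]
    push_cast
    ring
  refine pos_of_strictMono_tendsto
    (F := fun x => stdNormalCDF x ^ 2 - x * stdNormalPDF x * stdNormalCDF x - stdNormalPDF x ^ 2)
    (strictMono_of_deriv_pos fun y => ?_) ?_ x
  · rw [(hd y).deriv]
    exact mul_pos (pdf_pos y) (H_pos y)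
  · have h := ((C0.mul C0).sub (P1.mul C0)).sub (P0.mul P0)
    simp only [mul_zero, zero_mul, sub_zero] at h
    exact h.congr fun x => by ring

/-- `0 < ξ·ε(ξ) + ε(ξ)² < 1` for all `ξ ∈ ℝ`, where `ε = φ/Φ`. -/
theorem stmt_7 (ξ : ℝ) :
    0 < ξ * (stdNormalPDF ξ / stdNormalCDF ξ) + (stdNormalPDF ξ / stdNormalCDF ξ) ^ 2 ∧
      ξ * (stdNormalPDF ξ / stdNormalCDF ξ) + (stdNormalPDF ξ / stdNormalCDF ξ) ^ 2 < 1 := by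
  have hc := cdf_pos ξ
  have hp := pdf_pos ξ
  have hF := F_pos ξ
  have hG := G_pos ξ
  set p := stdNormalPDF ξ with hpdef
  set c := stdNormalCDF ξ with hcdef
  have key : ξ * (p / c) + (p / c) ^ 2 = (ξ * c * p + p ^ 2) / c ^ 2 := by
    field_simp
  constructor
  · rw [key]
    refine div_pos ?_ (by positivity)
    nlinarith [mul_pos hp hF]
  · rw [key, div_lt_one (by positivity)]
    nlinarith
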